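/- Define the directed distance δ on ℤ/3ℤ by δ(u,v) = the least natural number k ∈ {0,1,2} with v = u + k, and for α, β ∈ (ℤ/3ℤ)^m define d(α,β) = ∑_{i=1}^{m} δ(α_i, β_i). There exists a constant c such that for every natural number m ≥ 1 and every real x > 0, there exist a natural number s with 0 ≤ s ≤ 2m and a set C ⊆ (ℤ/3ℤ)^m such that: for every β ∈ (ℤ/3ℤ)^m there is some α ∈ C with d(α,β) ≤ s, and |C| ≤ (m+1)^c · 3^m · x^s / (1+x+x²)^m. -/

import Mathlib

/-- The directed cyclic distance on `ℤ/3ℤ`: the least natural number `k`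
(necessarily in `{0,1,2}`) with `v = u + k`. -/
noncomputable def cyclicDelta (u v : ZMod 3) : ℕ :=
  sInf {k : ℕ | v = u + (k : ZMod 3)}

/-- The total directed distance on `(ℤ/3ℤ)^m`:
`d(α,β) = ∑_{i=1}^{m} δ(α_i, β_i)`. -/
noncomputable def cyclicDist {m : ℕ} (α β : Fin m → ZMod 3) : ℕ :=
  ∑ i, cyclicDelta (α i) (β i)

lemma cyclicDelta_eq (u v : ZMod 3) : cyclicDelta u v = (v - u).val := by
  have hmem : (v - u).val ∈ {k : ℕ | v = u + (k : ZMod 3)} := by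
    simp [ZMod.natCast_val, ZMod.cast_id]
  refine le_antisymm (Nat.sInf_le hmem) (le_csInf ⟨_, hmem⟩ ?_)
  intro k hk
  have h : ((k : ZMod 3)) = v - u := by rw [Set.mem_setOf_eq] at hk; rw [hk]; ring
  calc (v - u).val = ((k : ZMod 3)).val := by rw [h]
    _ = k % 3 := ZMod.val_natCast 3 k
    _ ≤ k := Nat.mod_le k 3

lemma cyclicDelta_le_two (u v : ZMod 3) : cyclicDelta u v ≤ 2 := by
  rw [cyclicDelta_eq]
  have := ZMod.val_lt (v - u)
  omega

lemma cyclicDist_le (m : ℕ) (α β : Fin m → ZMod 3) : cyclicDist α β ≤ 2 * m := by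
  calc cyclicDist α β ≤ ∑ _i : Fin m, 2 :=
        Finset.sum_le_sum (fun i _ => cyclicDelta_le_two _ _)
    _ = 2 * m := by simp [mul_comm]

lemma sum_zmod3 (x : ℝ) : ∑ v : ZMod 3, x ^ (v.val) = 1 + x + x ^ 2 := by
  show ∑ v : Fin 3, x ^ (v.val) = 1 + x + x ^ 2
  rw [Fin.sum_univ_three]
  norm_num

lemma sum_pow_dist (m : ℕ) (x : ℝ) :
    ∑ β : Fin m → ZMod 3, x ^ cyclicDist 0 β = (1 + x + x ^ 2) ^ m := by
  have h1 : ∀ β : Fin m → ZMod 3, x ^ cyclicDist 0 β = ∏ i, x ^ ((β i).val) := by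
    intro β
    rw [cyclicDist, ← Finset.prod_pow_eq_pow_sum]
    refine Finset.prod_congr rfl (fun i _ => ?_)
    rw [cyclicDelta_eq]
    simp
  calc ∑ β : Fin m → ZMod 3, x ^ cyclicDist 0 β
      = ∑ β ∈ Fintype.piFinset (fun _ : Fin m => (Finset.univ : Finset (ZMod 3))),
          ∏ i, x ^ ((β i).val) := by
        rw [Fintype.piFinset_univ]
        exact Finset.sum_congr rfl (fun β _ => h1 β)
    _ = ∏ _i : Fin m, ∑ v : ZMod 3, x ^ (v.val) := (Finset.prod_univ_sum (fun _ : Fin m => (Finset.univ : Finset (ZMod 3))) (fun _ v => x ^ (v.val))).symm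
    _ = (1 + x + x ^ 2) ^ m := by
        simp [sum_zmod3 x]

lemma cover_lemma {G : Type*} [Fintype G] [DecidableEq G] (r : G → G → Prop)
    [DecidableRel r] (k V : ℕ)
    (hV : ∀ β : G, (Finset.univ.filter (fun α => r α β)).card = V)
    (hk : Fintype.card G * (Fintype.card G - V) ^ k < Fintype.card G ^ k) :
    ∃ C : Finset G, C.card ≤ k ∧ ∀ β, ∃ α ∈ C, r α β := by
  classical
  set n := Fintype.card G with hn
  set Bad : G → Finset (Fin k → G) :=
    fun β => Fintype.piFinset (fun _ => Finset.univ.filter (fun α => ¬ r α β)) with hBad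
  have hBadcard : ∀ β, (Bad β).card = (n - V) ^ k := by
    intro β
    rw [hBad]
    rw [Fintype.card_piFinset]
    have h2 : (Finset.univ.filter (fun α => ¬ r α β)).card = n - V := by
      have := Finset.card_filter_add_card_filter_not
        (s := (Finset.univ : Finset G)) (p := fun α => r α β)
      rw [hV β] at this
      simp only [Finset.card_univ] at this
      omega
    simp [h2]
  have hex : ∃ t : Fin k → G, ∀ β, t ∉ Bad β := by
    by_contra hcon
    push_neg at hcon
    have hsub : (Finset.univ : Finset (Fin k → G)) ⊆ Finset.univ.biUnion Bad := by
      intro t _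
      obtain ⟨β, hβ⟩ := hcon t
      exact Finset.mem_biUnion.mpr ⟨β, Finset.mem_univ β, hβ⟩
    have hu : (Finset.univ : Finset (Fin k → G)).card = n ^ k := by
      rw [Finset.card_univ, Fintype.card_fun]
      simp [hn]
    have hcard : n ^ k ≤ (Finset.univ.biUnion Bad).card := by
      rw [← hu]; exact Finset.card_le_card hsub
    have hb : (Finset.univ.biUnion Bad).card ≤ n * (n - V) ^ k := by
      refine le_trans Finset.card_biUnion_le ?_
      simp [hBadcard, hn]
    omega
  obtain ⟨t, ht⟩ := hex
  refine ⟨Finset.image t Finset.univ, ?_, ?_⟩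
  · calc (Finset.image t Finset.univ).card ≤ (Finset.univ : Finset (Fin k)).card :=
      Finset.card_image_le
    _ = k := by simp
  · intro β
    have := ht β
    rw [hBad] at this
    simp only [Fintype.mem_piFinset, Finset.mem_filter, Finset.mem_univ, true_and,
      not_forall, not_not] at this
    obtain ⟨i, hi⟩ := this
    exact ⟨t i, Finset.mem_image_of_mem t (Finset.mem_univ i), hi⟩

lemma key_ineq (m V : ℕ) (hm : 1 ≤ m) (hV1 : 1 ≤ V) (hVn : V ≤ 3 ^ m) :
    3 ^ m * (3 ^ m - V) ^ (2 * m * (3 ^ m / V + 1)) <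
      (3 ^ m : ℕ) ^ (2 * m * (3 ^ m / V + 1)) := by
  set n : ℕ := 3 ^ m with hn
  set q : ℕ := n / V + 1 with hq
  set k : ℕ := 2 * m * q with hk
  have hqV : n < q * V := by
    have h1 := Nat.div_add_mod n V
    have h2 := Nat.mod_lt n (show 0 < V by omega)
    have h3 : q * V = V * (n / V) + V := by rw [hq]; ring
    omega
  rw [← Nat.cast_lt (α := ℝ)]
  push_cast [Nat.cast_sub hVn]
  set a : ℝ := (n : ℝ) with ha'
  set b : ℝ := (V : ℝ) with hb'
  have ha : (0:ℝ) < a := by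
    rw [ha', hn]; positivity
  have hb : (0:ℝ) < b := by rw [hb']; exact_mod_cast hV1
  have hba : b ≤ a := by rw [ha', hb']; exact_mod_cast hVn
  have hqb : a < (q:ℝ) * b := by
    rw [ha', hb']; exact_mod_cast hqV
  have hstep2 : 2 * a ^ q ≤ (a + b) ^ q := by
    have hp : (0:ℝ) < b / a := div_pos hb ha
    have hber : 1 + (q:ℝ) * (b/a) ≤ (1 + b/a) ^ q := one_add_mul_le_pow (by linarith) q
    have h2 : (1:ℝ) ≤ (q:ℝ) * (b/a) := by
      rw [← mul_div_assoc, le_div_iff₀ ha, one_mul]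
      linarith
    have h3 : (2:ℝ) ≤ (1 + b/a) ^ q := by linarith
    have h4 : ((1 + b/a) * a) ^ q = (a + b) ^ q := by
      congr 1
      field_simp
    calc 2 * a ^ q ≤ (1 + b/a) ^ q * a ^ q := by
          have := pow_pos ha q
          nlinarith
      _ = ((1 + b/a) * a) ^ q := (mul_pow _ _ q).symm
      _ = (a + b) ^ q := h4
  have hstep3 : (4:ℝ) ^ m * a ^ k ≤ (a + b) ^ k := by
    have e1 : (a + b) ^ k = ((a + b) ^ q) ^ (2 * m) := by
      rw [← pow_mul, hk]; ring_nf
    have e2 : ((2:ℝ) * a ^ q) ^ (2 * m) = 4 ^ m * a ^ k := by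
      rw [mul_pow, ← pow_mul, hk]
      have : (2:ℝ) ^ (2 * m) = 4 ^ m := by
        rw [pow_mul]; norm_num
      rw [this]; ring_nf
    rw [e1, ← e2]
    exact pow_le_pow_left₀ (by positivity) hstep2 (2 * m)
  have hab2 : (0:ℝ) ≤ a - b := by linarith
  have habp : (0:ℝ) < (a + b) ^ k := pow_pos (by linarith) k
  rw [← mul_lt_mul_iff_of_pos_right habp]
  have h34 : a < 4 ^ m := by
    rw [ha', hn]
    have : ((3:ℕ):ℝ) ^ m < (4:ℝ) ^ m := by
      exact pow_lt_pow_left₀ (by norm_num) (by norm_num) (by omega)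
    push_cast
    push_cast at this
    linarith
  calc a * (a - b) ^ k * (a + b) ^ k = a * ((a - b) * (a + b)) ^ k := by
        rw [mul_pow]; ring
    _ = a * (a ^ 2 - b ^ 2) ^ k := by ring_nf
    _ ≤ a * (a ^ 2) ^ k := by
        have hnn : (0:ℝ) ≤ a ^ 2 - b ^ 2 := by nlinarith
        have hbb : a ^ 2 - b ^ 2 ≤ a ^ 2 := by nlinarith
        exact mul_le_mul_of_nonneg_left (pow_le_pow_left₀ hnn hbb k) (le_of_lt ha)
    _ = a * a ^ (2 * k) := by rw [← pow_mul]
    _ < 4 ^ m * a ^ (2 * k) := by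
        exact mul_lt_mul_of_pos_right h34 (pow_pos ha _)
    _ = (4 ^ m * a ^ k) * a ^ k := by rw [two_mul, pow_add]; ring
    _ ≤ (a + b) ^ k * a ^ k := by
        apply mul_le_mul_of_nonneg_right hstep3 (le_of_lt (pow_pos ha k))
    _ = a ^ k * (a + b) ^ k := by ring

lemma dist_shift {m : ℕ} (α β : Fin m → ZMod 3) :
    cyclicDist α β = cyclicDist 0 (β - α) := by
  simp [cyclicDist, cyclicDelta_eq]


set_option maxHeartbeats 1000000 in
/-- There is a constant `c` such that for every `m ≥ 1` and every real `x > 0`,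
there exist `s ≤ 2m` and a covering code `C ⊆ (ℤ/3ℤ)^m` of radius `s` with respect
to the directed distance `d`, with `|C| ≤ (m+1)^c · 3^m · x^s / (1+x+x²)^m`. -/
theorem stmt_15 :
    ∃ c : ℕ, ∀ m : ℕ, 1 ≤ m → ∀ x : ℝ, 0 < x →
      ∃ s : ℕ, s ≤ 2 * m ∧
        ∃ C : Finset (Fin m → ZMod 3),
          (∀ β : Fin m → ZMod 3, ∃ α ∈ C, cyclicDist α β ≤ s) ∧
          (C.card : ℝ) ≤ (m + 1) ^ c * 3 ^ m * x ^ s / (1 + x + x ^ 2) ^ m := by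
  classical
  refine ⟨4, fun m hm x hx => ?_⟩
  set A : ℝ := (1 + x + x ^ 2) ^ m with hA'
  have hA : (0:ℝ) < A := by rw [hA']; positivity
  set N : ℕ → ℕ := fun s' =>
    (Finset.univ.filter (fun β : Fin m → ZMod 3 => cyclicDist 0 β = s')).card with hN
  -- fiberwise decomposition
  have hmaps : ∀ β ∈ (Finset.univ : Finset (Fin m → ZMod 3)),
      cyclicDist 0 β ∈ Finset.range (2 * m + 1) := fun β _ =>
    Finset.mem_range.mpr (Nat.lt_succ_of_le (cyclicDist_le m 0 β))
  have hfib := Finset.sum_fiberwise_of_maps_to hmaps (fun β => x ^ cyclicDist 0 β)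
  have hinner : ∀ s' ∈ Finset.range (2 * m + 1),
      (∑ β ∈ Finset.univ.filter (fun β : Fin m → ZMod 3 => cyclicDist 0 β = s'),
        x ^ cyclicDist 0 β) = (N s' : ℝ) * x ^ s' := by
    intro s' _
    rw [Finset.sum_congr rfl (fun β hβ => by rw [(Finset.mem_filter.mp hβ).2]),
      Finset.sum_const, hN, nsmul_eq_mul]
  have hsum : ∑ s' ∈ Finset.range (2 * m + 1), (N s' : ℝ) * x ^ s' = A := by
    rw [← Finset.sum_congr rfl hinner, hfib, sum_pow_dist, hA']
  have hconst : ∑ _s' ∈ Finset.range (2 * m + 1), A / (2 * (m:ℝ) + 1) = A := by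
    rw [Finset.sum_const, Finset.card_range, nsmul_eq_mul]
    have h1 : ((2 * m + 1 : ℕ) : ℝ) = 2 * (m:ℝ) + 1 := by push_cast; ring
    rw [h1, mul_div_cancel₀]
    positivity
  obtain ⟨s, hsmem, hs⟩ := Finset.exists_le_of_sum_le (f := fun _ => A / (2 * (m:ℝ) + 1))
    (g := fun s' => (N s' : ℝ) * x ^ s')
    ⟨0, Finset.mem_range.mpr (by omega)⟩ (le_of_eq (hconst.trans hsum.symm))
  have hsle : s ≤ 2 * m := by
    have := Finset.mem_range.mp hsmem; omega
  set V : ℕ := (Finset.univ.filter (fun β : Fin m → ZMod 3 => cyclicDist 0 β ≤ s)).card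
    with hVdef
  have hNV : N s ≤ V := by
    apply Finset.card_le_card
    intro β hβ
    simp only [Finset.mem_filter, Finset.mem_univ, true_and] at *
    omega
  have hNpos : 0 < N s := by
    by_contra h
    have h0 : N s = 0 := by omega
    rw [h0] at hs
    simp only [Nat.cast_zero, zero_mul] at hs
    have : (0:ℝ) < A / (2 * (m:ℝ) + 1) := by positivity
    linarith
  have hV1 : 1 ≤ V := le_trans hNpos hNV
  have hcardG : Fintype.card (Fin m → ZMod 3) = 3 ^ m := by simp
  have hVn : V ≤ 3 ^ m := by
    rw [hVdef, ← hcardG, ← Finset.card_univ]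
    exact Finset.card_filter_le _ _
  have hVconst : ∀ β : Fin m → ZMod 3,
      (Finset.univ.filter (fun α => cyclicDist α β ≤ s)).card = V := by
    intro β
    rw [hVdef]
    apply Finset.card_bij (fun α _ => β - α)
    · intro α hα
      simp only [Finset.mem_filter, Finset.mem_univ, true_and] at *
      rwa [dist_shift] at hα
    · intro a _ b _ h
      have := congrArg (fun z => β - z) h
      simpa using this
    · intro γ hγ
      refine ⟨β - γ, ?_, by simp⟩
      simp only [Finset.mem_filter, Finset.mem_univ, true_and] at *
      rwa [dist_shift, sub_sub_cancel]
  set k : ℕ := 2 * m * (3 ^ m / V + 1) with hkdef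
  obtain ⟨C, hCk, hCcov⟩ := cover_lemma (G := Fin m → ZMod 3)
    (fun α β => cyclicDist α β ≤ s) k V hVconst
    (by rw [hcardG]; exact key_ineq m V hm hV1 hVn)
  refine ⟨s, hsle, C, hCcov, ?_⟩
  -- numeric bound
  have hV0 : (0:ℝ) < (V:ℝ) := by exact_mod_cast hV1
  have hxs : (0:ℝ) < x ^ s := pow_pos hx s
  have hNV' : (N s : ℝ) ≤ (V:ℝ) := by exact_mod_cast hNV
  have hAV : A ≤ (2 * (m:ℝ) + 1) * ((V:ℝ) * x ^ s) := by
    have h1 : A / (2 * (m:ℝ) + 1) ≤ (V:ℝ) * x ^ s :=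
      le_trans hs (mul_le_mul_of_nonneg_right hNV' hxs.le)
    rw [div_le_iff₀ (by positivity)] at h1
    linarith [h1]
  have hknat : k ≤ 4 * m * (3 ^ m / V) := by
    have h1 : 1 ≤ 3 ^ m / V := (Nat.one_le_div_iff (by omega)).mpr hVn
    rw [hkdef]
    nlinarith
  have hCb : (C.card : ℝ) ≤ 4 * (m:ℝ) * (3:ℝ) ^ m / (V:ℝ) := by
    calc (C.card : ℝ) ≤ (k : ℝ) := by exact_mod_cast hCk
      _ ≤ ((4 * m * (3 ^ m / V) : ℕ) : ℝ) := by exact_mod_cast hknat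
      _ = 4 * (m:ℝ) * ((3 ^ m / V : ℕ) : ℝ) := by push_cast; ring
      _ ≤ 4 * (m:ℝ) * ((3:ℝ) ^ m / (V:ℝ)) := by
          have := Nat.cast_div_le (m := 3 ^ m) (n := V) (α := ℝ)
          have hmn : (0:ℝ) ≤ 4 * (m:ℝ) := by positivity
          push_cast at this
          nlinarith
      _ = 4 * (m:ℝ) * (3:ℝ) ^ m / (V:ℝ) := by ring
  rw [le_div_iff₀ hA]
  have hm' : (1:ℝ) ≤ (m:ℝ) := by exact_mod_cast hm
  calc (C.card : ℝ) * A
      ≤ (4 * (m:ℝ) * (3:ℝ) ^ m / (V:ℝ)) * ((2 * (m:ℝ) + 1) * ((V:ℝ) * x ^ s)) := by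
        apply mul_le_mul hCb hAV hA.le (by positivity)
    _ = 4 * (m:ℝ) * (2 * (m:ℝ) + 1) * ((3:ℝ) ^ m * x ^ s) := by
        field_simp
    _ ≤ ((m:ℝ) + 1) ^ 4 * ((3:ℝ) ^ m * x ^ s) := by
        have h45 : 4 * (m:ℝ) * (2 * (m:ℝ) + 1) ≤ ((m:ℝ) + 1) ^ 4 := by
          have key : ∀ i j : ℕ, i ≤ j → (m:ℝ) ^ i ≤ (m:ℝ) ^ j :=
            fun i j h => pow_le_pow_right₀ hm' h
          nlinarith [key 2 4 (by norm_num), key 2 3 (by norm_num)]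
        exact mul_le_mul_of_nonneg_right h45 (by positivity)
    _ = ((m:ℝ) + 1) ^ 4 * (3:ℝ) ^ m * x ^ s := by ring
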